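/- Let A and B be finite groups and let C be a subgroup of A × B. Suppose |A| < |B : N| for every proper normal subgroup N of B. Then either C ≤ A × B₁ for some proper subgroup B₁ < B, or C = A₁ × B for some subgroup A₁ ≤ A. -/

import Mathlib

theorem stmt_11 {A B : Type*} [Group A] [Group B] [Fintype A] [Fintype B]
    (C : Subgroup (A × B))
    (h : ∀ N : Subgroup B, N.Normal → N ≠ ⊤ → Nat.card A < N.index) :
    (∃ B₁ : Subgroup B, B₁ ≠ ⊤ ∧ C ≤ (⊤ : Subgroup A).prod B₁) ∨
    (∃ A₁ : Subgroup A, C = A₁.prod ⊤) := by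
  by_cases hB : C.map (MonoidHom.snd A B) = ⊤
  · -- projection to B is surjective
    right
    set s : C →* B := (MonoidHom.snd A B).comp C.subtype with hs
    have hssurj : Function.Surjective s := by
      intro b
      have hb : b ∈ C.map (MonoidHom.snd A B) := hB ▸ Subgroup.mem_top b
      obtain ⟨x, hx, hx2⟩ := hb
      exact ⟨⟨x, hx⟩, hx2⟩
    set N : Subgroup B := C.comap (MonoidHom.inr A B) with hN
    haveI hNnorm : N.Normal := by
      constructor
      intro n hn b
      obtain ⟨⟨⟨a, b'⟩, hc⟩, hcb⟩ := hssurj b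
      simp only [hs, MonoidHom.comp_apply, Subgroup.coe_subtype, MonoidHom.coe_snd] at hcb
      subst hcb
      have : (a, b') * (1, n) * (a, b')⁻¹ ∈ C := C.mul_mem (C.mul_mem hc hn) (C.inv_mem hc)
      simpa [Prod.ext_iff, mul_assoc, hN] using this
    have hNtop : N = ⊤ := by
      by_contra hne
      have hlt := h N hNnorm hne
      -- build g : C →* B ⧸ N
      set g : C →* B ⧸ N := (QuotientGroup.mk' N).comp s with hg
      have hgsurj : Function.Surjective g := (QuotientGroup.mk'_surjective N).comp hssurj
      set f : C →* A := (MonoidHom.fst A B).comp C.subtype with hf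
      have hker : f.ker ≤ g.ker := by
        intro c hc
        have hc1 : (c : A × B).1 = 1 := hc
        have hmem : (c : A × B).2 ∈ N := by
          show ((1 : A), (c : A × B).2) ∈ C
          have h2 : ((c : A × B).1, (c : A × B).2) ∈ C := by simp
          rwa [hc1] at h2
        simpa [hg, MonoidHom.mem_ker, QuotientGroup.eq_one_iff, hs] using hmem
      have h1 : N.index = g.ker.index := by
        rw [Subgroup.index_ker g]
        have : g.range = ⊤ := MonoidHom.range_eq_top.mpr hgsurj
        rw [this]
        exact (Nat.card_congr Subgroup.topEquiv.toEquiv).symm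
      have h2 : g.ker.index ∣ f.ker.index := Subgroup.index_dvd_of_le hker
      have h3 : f.ker.index = Nat.card f.range := Subgroup.index_ker f
      have h4 : Nat.card f.range ≤ Nat.card A :=
        Nat.card_le_card_of_injective _ f.range.subtype_injective
      have h5 : f.ker.index ≠ 0 := Subgroup.index_ne_zero_of_finite
      have h6 : g.ker.index ≤ f.ker.index := Nat.le_of_dvd (Nat.pos_of_ne_zero h5) h2
      omega
    refine ⟨C.map (MonoidHom.fst A B), le_antisymm ?_ ?_⟩
    · rintro ⟨a, b⟩ hab
      exact ⟨⟨(a, b), hab, rfl⟩, Subgroup.mem_top b⟩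
    · rintro ⟨a, b⟩ ⟨⟨⟨a', b'⟩, hc, (rfl : a' = a)⟩, -⟩
      have h1b : ((1 : A), b'⁻¹ * b) ∈ C := by
        have : b'⁻¹ * b ∈ N := hNtop ▸ Subgroup.mem_top _
        exact this
      have := C.mul_mem hc h1b
      simpa using this
  · left
    refine ⟨C.map (MonoidHom.snd A B), hB, ?_⟩
    rintro ⟨a, b⟩ hab
    exact ⟨Subgroup.mem_top a, ⟨(a, b), hab, rfl⟩⟩
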